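/- Pauli twirl identity: for every 2^n × 2^n complex matrix X and every s : Fin n → Fin 4, 4^{-n} Σ_{t : Fin n → Fin 4} (-1)^{s·t} (P_t * X * P_t) = (2^{-n} trace(P_s * X)) • P_s. -/

import Mathlib

open Matrix

/-- Single-qubit Pauli matrices: σ₀ = I, σ₁ = X, σ₂ = Y, σ₃ = Z. -/
noncomputable def pauli : Fin 4 → Matrix (Fin 2) (Fin 2) ℂ
  | 0 => 1
  | 1 => !![0, 1; 1, 0]
  | 2 => !![0, -Complex.I; Complex.I, 0]
  | 3 => !![1, 0; 0, -1]

/-- The Pauli string `P_s = ⊗ᵢ σ_{s i}` as a `2^n × 2^n` matrix, with rows and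
columns indexed by bit strings `Fin n → Fin 2` (entrywise Kronecker product). -/
noncomputable def pauliString {n : ℕ} (s : Fin n → Fin 4) :
    Matrix (Fin n → Fin 2) (Fin n → Fin 2) ℂ :=
  Matrix.of fun x y => ∏ i, pauli (s i) (x i) (y i)

/-- The commutation exponent `s·t ∈ ZMod 2`: parity of the number of indices where
`s` and `t` are both non-identity and differ. -/
def commExp {n : ℕ} (s t : Fin n → Fin 4) : ZMod 2 :=
  ((Finset.univ.filter fun i => s i ≠ 0 ∧ t i ≠ 0 ∧ s i ≠ t i).card : ZMod 2)

/-- The real sign `(-1)^{s·t}`. -/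
noncomputable def pauliSign {n : ℕ} (s t : Fin n → Fin 4) : ℝ :=
  (-1 : ℝ) ^ (commExp s t).val

def sign1 (k j : Fin 4) : ℂ := if k ≠ 0 ∧ j ≠ 0 ∧ k ≠ j then -1 else 1

lemma key (k : Fin 4) (a b x y : Fin 2) :
    ∑ j : Fin 4, sign1 k j * (pauli j a x * pauli j y b)
      = 2 * (pauli k a b * pauli k y x) := by
  fin_cases k <;> fin_cases a <;> fin_cases b <;> fin_cases x <;> fin_cases y <;>
    simp [sign1, pauli, Fin.sum_univ_four, Matrix.one_apply, Complex.I_mul_I] <;> ring_nf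

lemma sum_prod_eq {n : ℕ} (f : Fin n → Fin 4 → ℂ) :
    ∑ t : Fin n → Fin 4, ∏ i, f i (t i) = ∏ i, ∑ j, f i j := by
  rw [Finset.prod_univ_sum]
  simp [Fintype.piFinset_univ]

lemma signProd {n : ℕ} (s t : Fin n → Fin 4) :
    ((pauliSign s t : ℝ) : ℂ) = ∏ i, sign1 (s i) (t i) := by
  have h1 : ∏ i, sign1 (s i) (t i)
      = (-1 : ℂ) ^ (Finset.univ.filter fun i => s i ≠ 0 ∧ t i ≠ 0 ∧ s i ≠ t i).card := by
    simp only [sign1]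
    rw [Finset.prod_ite (f := fun _ => (-1 : ℂ)) (g := fun _ => (1 : ℂ))]
    simp
  rw [h1, pauliSign, commExp]
  set c := (Finset.univ.filter fun i => s i ≠ 0 ∧ t i ≠ 0 ∧ s i ≠ t i).card
  have hv : ((c : ZMod 2)).val = c % 2 := ZMod.val_natCast 2 c
  rw [hv]
  push_cast
  conv_rhs => rw [← Nat.div_add_mod c 2, pow_add, pow_mul]
  norm_num

/-- Pauli twirl identity:
`4^{-n} Σ_t (-1)^{s·t} P_t X P_t = (2^{-n} tr(P_s X)) • P_s`. -/
theorem pauli_twirl_eq {n : ℕ} (hn : 0 < n)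
    (X : Matrix (Fin n → Fin 2) (Fin n → Fin 2) ℂ) (s : Fin n → Fin 4) :
    ((4 : ℂ) ^ n)⁻¹ • ∑ t : Fin n → Fin 4,
        (pauliSign s t : ℂ) • (pauliString t * X * pauliString t) =
      (((2 : ℂ) ^ n)⁻¹ * (pauliString s * X).trace) • pauliString s := by
  have h2 : ((2 : ℂ) ^ n) ≠ 0 := pow_ne_zero _ two_ne_zero
  ext a b
  simp only [Matrix.smul_apply, Matrix.sum_apply, smul_eq_mul]
  have step1 : ∀ t : Fin n → Fin 4, (pauliString t * X * pauliString t) a b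
      = ∑ x, ∑ y, pauliString t a x * X x y * pauliString t y b := by
    intro t
    rw [Finset.sum_comm]
    simp [Matrix.mul_apply, Finset.sum_mul]
  have htr : (pauliString s * X).trace = ∑ y, ∑ x, pauliString s y x * X x y := by
    simp [Matrix.trace, Matrix.mul_apply, Matrix.diag]
  have hmain : ∑ t : Fin n → Fin 4, (pauliSign s t : ℂ) * ((pauliString t * X * pauliString t) a b)
      = 2 ^ n * (pauliString s * X).trace * pauliString s a b := by
    calc ∑ t : Fin n → Fin 4, (pauliSign s t : ℂ) * ((pauliString t * X * pauliString t) a b)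
        = ∑ t : Fin n → Fin 4, ∑ x, ∑ y,
            X x y * ((pauliSign s t : ℂ) * (pauliString t a x * pauliString t y b)) := by
          refine Finset.sum_congr rfl fun t _ => ?_
          rw [step1 t, Finset.mul_sum]
          refine Finset.sum_congr rfl fun x _ => ?_
          rw [Finset.mul_sum]
          refine Finset.sum_congr rfl fun y _ => ?_
          ring
      _ = ∑ x, ∑ y, X x y * ∑ t : Fin n → Fin 4,
            (pauliSign s t : ℂ) * (pauliString t a x * pauliString t y b) := by
          rw [Finset.sum_comm]
          refine Finset.sum_congr rfl fun x _ => ?_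
          rw [Finset.sum_comm]
          refine Finset.sum_congr rfl fun y _ => ?_
          rw [Finset.mul_sum]
      _ = ∑ x, ∑ y, X x y * (2 ^ n * (pauliString s a b * pauliString s y x)) := by
          refine Finset.sum_congr rfl fun x _ => Finset.sum_congr rfl fun y _ => ?_
          congr 1
          have : ∑ t : Fin n → Fin 4,
              (pauliSign s t : ℂ) * (pauliString t a x * pauliString t y b)
              = ∑ t : Fin n → Fin 4, ∏ i,
                  (sign1 (s i) (t i) * (pauli (t i) (a i) (x i) * pauli (t i) (y i) (b i))) := by
            refine Finset.sum_congr rfl fun t _ => ?_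
            rw [signProd]
            simp only [pauliString, Matrix.of_apply]
            rw [Finset.prod_mul_distrib, Finset.prod_mul_distrib]
          rw [this]
          refine (sum_prod_eq (fun i j =>
            sign1 (s i) j * (pauli j (a i) (x i) * pauli j (y i) (b i)))).trans ?_
          have : ∀ i : Fin n, ∑ j : Fin 4,
              sign1 (s i) j * (pauli j (a i) (x i) * pauli j (y i) (b i))
              = 2 * (pauli (s i) (a i) (b i) * pauli (s i) (y i) (x i)) := fun i => key _ _ _ _ _
          rw [Finset.prod_congr rfl fun i _ => this i]
          rw [Finset.prod_mul_distrib, Finset.prod_const]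
          simp [pauliString, Finset.prod_mul_distrib]
      _ = 2 ^ n * (pauliString s * X).trace * pauliString s a b := by
          rw [htr, Finset.sum_comm]
          simp only [Finset.mul_sum, Finset.sum_mul]
          exact Finset.sum_congr rfl fun y _ => Finset.sum_congr rfl fun x _ => by ring
  rw [hmain]
  have h4 : (4 : ℂ) ^ n = 2 ^ n * 2 ^ n := by rw [← mul_pow]; norm_num
  rw [h4, mul_inv]
  field_simp
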